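/- Let G be a finite abelian group, k ≥ 1, and ℓ with exp(G) ≤ ℓ ≤ D(G) − 1. Then D_k(G) ≤ (k−1)·ℓ + max{D(G), s_{≤ℓ}(G) − ℓ}. In particular, D_k(G) ≤ (k−1)·exp(G) + max{D(G), η(G) − exp(G)}. -/

import Mathlib

open Multiset

/-- A nonempty zero-sum sequence (multiset) over `G`. -/
def IsZeroSumSeq {G : Type*} [AddCommGroup G] (S : Multiset G) : Prop :=
  S ≠ 0 ∧ S.sum = 0

/-- A minimal zero-sum sequence: nonempty, zero-sum, and with no proper
nonempty zero-sum subsequence. -/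
def IsMinZeroSum {G : Type*} [AddCommGroup G] (S : Multiset G) : Prop :=
  S ≠ 0 ∧ S.sum = 0 ∧ ∀ T : Multiset G, T ≤ S → T ≠ 0 → T.sum = 0 → T = S

/-- `ζ` is a factorization of `B` into minimal zero-sum sequences. -/
def IsFactorization {G : Type*} [AddCommGroup G] (ζ : Multiset (Multiset G))
    (B : Multiset G) : Prop :=
  ζ.sum = B ∧ ∀ A ∈ ζ, IsMinZeroSum A

/-- The set of lengths `L(B)` of factorizations of `B` into minimal zero-sum
sequences. -/
def lengthSet {G : Type*} [AddCommGroup G] (B : Multiset G) : Set ℕ :=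
  { n | ∃ ζ : Multiset (Multiset G), IsFactorization ζ B ∧ Multiset.card ζ = n }

/-- `max L(B)`, the maximal length of a factorization of `B` into minimal
zero-sum sequences. -/
noncomputable def maxL {G : Type*} [AddCommGroup G] (B : Multiset G) : ℕ :=
  sSup (lengthSet B)

/-- `S` contains `k` disjoint nonempty zero-sum subsequences. -/
def HasKDisjointZeroSum {G : Type*} [AddCommGroup G] (k : ℕ) (S : Multiset G) : Prop :=
  ∃ T : Multiset (Multiset G), Multiset.card T = k ∧
    (∀ A ∈ T, IsZeroSumSeq A) ∧ T.sum ≤ S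

/-- The `k`-wise Davenport constant: the smallest `ℓ` such that every sequence
over `G` of length at least `ℓ` has `k` disjoint nonempty zero-sum
subsequences. -/
noncomputable def Dk (G : Type*) [AddCommGroup G] (k : ℕ) : ℕ :=
  sInf { ℓ : ℕ | ∀ S : Multiset G, ℓ ≤ Multiset.card S → HasKDisjointZeroSum k S }

/-- `s_{≤ k}(G)` as an extended natural number: the smallest `m` such that every
sequence over `G` of length at least `m` has a nonempty zero-sum subsequence of
length at most `k`. -/
noncomputable def sLE (G : Type*) [AddCommGroup G] (k : ℕ) : ℕ∞ :=
  sInf { m : ℕ∞ | ∀ S : Multiset G, m ≤ (Multiset.card S : ℕ∞) →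
    ∃ T ≤ S, T ≠ 0 ∧ T.sum = 0 ∧ Multiset.card T ≤ k }

/-- `s_{≤ k}(G)` as a natural number (used when it is known to be finite). -/
noncomputable def sleN (G : Type*) [AddCommGroup G] (k : ℕ) : ℕ :=
  sInf { m : ℕ | ∀ S : Multiset G, m ≤ Multiset.card S →
    ∃ T ≤ S, T ≠ 0 ∧ T.sum = 0 ∧ Multiset.card T ≤ k }

/-- `η(G) = s_{≤ exp(G)}(G)`. -/
noncomputable def etaC (G : Type*) [AddCommGroup G] : ℕ :=
  sleN G (AddMonoid.exponent G)

section Aux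

variable {G : Type*} [AddCommGroup G]

lemma zerosum_between (l : List G) (i j : ℕ) (hij : i < j) (hj : j ≤ l.length)
    (h : (l.take i).sum = (l.take j).sum) :
    ∃ T ≤ (↑l : Multiset G), T ≠ 0 ∧ T.sum = 0 := by
  refine ⟨↑((l.drop i).take (j - i)), ?_, ?_, ?_⟩
  · exact Multiset.coe_le.mpr
      (((l.drop i).take_sublist _).trans (l.drop_sublist i)).subperm
  · intro hz
    rw [Multiset.coe_eq_zero, ← List.length_eq_zero_iff] at hz
    rw [List.length_take, List.length_drop] at hz
    omega
  · have htake : l.take j = l.take i ++ (l.drop i).take (j - i) := by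
      conv_lhs => rw [show j = i + (j - i) by omega, List.take_add]
    rw [htake, List.sum_append] at h
    have h0 : ((l.drop i).take (j - i)).sum = 0 := by
      have := (left_eq_add).mp h
      exact this
    simpa [Multiset.sum_coe] using h0

variable [Fintype G]

lemma exists_zerosum_of_card_ge (S : Multiset G)
    (h : Fintype.card G ≤ Multiset.card S) :
    ∃ T ≤ S, T ≠ 0 ∧ T.sum = 0 := by
  induction S using Quotient.inductionOn with
  | _ l =>
    have hlen : Fintype.card G ≤ l.length := by simpa using h
    have hcard : Fintype.card G < Fintype.card (Fin (l.length + 1)) := by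
      simp; omega
    obtain ⟨i, j, hne, hfe⟩ :=
      Fintype.exists_ne_map_eq_of_card_lt
        (fun i : Fin (l.length + 1) => (l.take i).sum) hcard
    rcases lt_or_gt_of_ne (fun hc => hne (by exact Fin.ext (by exact_mod_cast congrArg Fin.val hc) )) with hij | hij
    · exact zerosum_between l i j hij (by omega) hfe
    · exact zerosum_between l j i hij (by omega) hfe.symm

lemma exponent_pos' : 0 < AddMonoid.exponent G :=
  AddMonoid.ExponentExists.exponent_pos AddMonoid.ExponentExists.of_finite

lemma exists_short_zerosum (S : Multiset G)
    (h : Fintype.card G * (AddMonoid.exponent G - 1) + 1 ≤ Multiset.card S) :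
    ∃ T ≤ S, T ≠ 0 ∧ T.sum = 0 ∧ Multiset.card T ≤ AddMonoid.exponent G := by
  classical
  set e := AddMonoid.exponent G with he
  have hepos : 0 < e := exponent_pos'
  have hg : ∃ g : G, e ≤ S.count g := by
    by_contra hc
    push_neg at hc
    have hsum : Multiset.card S = ∑ g ∈ S.toFinset, S.count g :=
      (Multiset.toFinset_sum_count_eq S).symm
    have hle : ∑ g ∈ S.toFinset, S.count g ≤ ∑ _g ∈ S.toFinset, (e - 1) :=
      Finset.sum_le_sum fun g _ => by have := hc g; omega
    have hcardle : S.toFinset.card ≤ Fintype.card G := Finset.card_le_univ _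
    have : Multiset.card S ≤ Fintype.card G * (e - 1) := by
      rw [hsum]
      calc ∑ g ∈ S.toFinset, S.count g ≤ S.toFinset.card * (e - 1) := by
            simpa using hle
        _ ≤ Fintype.card G * (e - 1) := Nat.mul_le_mul_right _ hcardle
    omega
  obtain ⟨g, hg⟩ := hg
  refine ⟨Multiset.replicate e g, Multiset.le_count_iff_replicate_le.mp hg, ?_, ?_, ?_⟩
  · intro hz
    have := congrArg Multiset.card hz
    simp at this
    omega
  · rw [Multiset.sum_replicate]
    exact AddMonoid.exponent_nsmul_eq_zero g
  · simp

lemma davenport_spec :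
    ∀ S : Multiset G, Dk G 1 ≤ Multiset.card S → HasKDisjointZeroSum 1 S := by
  have hmem : Fintype.card G ∈
      { m : ℕ | ∀ S : Multiset G, m ≤ Multiset.card S → HasKDisjointZeroSum 1 S } := by
    intro S hS
    obtain ⟨T, hTS, hT0, hTsum⟩ := exists_zerosum_of_card_ge S hS
    exact ⟨{T}, by simp, by simpa [IsZeroSumSeq] using ⟨hT0, hTsum⟩, by simpa using hTS⟩
  have := Nat.sInf_mem (⟨_, hmem⟩ : Set.Nonempty _)
  exact this

lemma sleN_spec (ℓ : ℕ) (hℓ : AddMonoid.exponent G ≤ ℓ) :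
    ∀ S : Multiset G, sleN G ℓ ≤ Multiset.card S →
      ∃ T ≤ S, T ≠ 0 ∧ T.sum = 0 ∧ Multiset.card T ≤ ℓ := by
  have hmem : Fintype.card G * (AddMonoid.exponent G - 1) + 1 ∈
      { m : ℕ | ∀ S : Multiset G, m ≤ Multiset.card S →
        ∃ T ≤ S, T ≠ 0 ∧ T.sum = 0 ∧ Multiset.card T ≤ ℓ } := by
    intro S hS
    obtain ⟨T, hTS, h1, h2, h3⟩ := exists_short_zerosum S hS
    exact ⟨T, hTS, h1, h2, h3.trans hℓ⟩
  have := Nat.sInf_mem (⟨_, hmem⟩ : Set.Nonempty _)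
  exact this

lemma key (ℓ : ℕ) (hℓ : AddMonoid.exponent G ≤ ℓ) :
    ∀ (k : ℕ) (S : Multiset G),
      k * ℓ + max (Dk G 1) (sleN G ℓ - ℓ) ≤ Multiset.card S →
      HasKDisjointZeroSum (k + 1) S := by
  classical
  intro k
  induction k with
  | zero =>
    intro S hS
    refine davenport_spec S ?_
    have := le_max_left (Dk G 1) (sleN G ℓ - ℓ)
    omega
  | succ k ih =>
    intro S hS
    have hs : sleN G ℓ ≤ Multiset.card S := by
      have h1 : sleN G ℓ ≤ ℓ + (sleN G ℓ - ℓ) := by omega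
      have h2 : ℓ + (sleN G ℓ - ℓ) ≤ (k + 1) * ℓ + max (Dk G 1) (sleN G ℓ - ℓ) := by
        have hmr := le_max_right (Dk G 1) (sleN G ℓ - ℓ)
        have hml : ℓ ≤ (k + 1) * ℓ := Nat.le_mul_of_pos_left ℓ (Nat.succ_pos k)
        omega
      omega
    obtain ⟨T, hTS, hT0, hTsum, hTcard⟩ := sleN_spec ℓ hℓ S hs
    have hcard' : k * ℓ + max (Dk G 1) (sleN G ℓ - ℓ) ≤ Multiset.card (S - T) := by
      rw [Multiset.card_sub hTS]
      have : (k + 1) * ℓ = k * ℓ + ℓ := by ring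
      omega
    obtain ⟨T', hT'card, hT'zs, hT'sum⟩ := ih (S - T) hcard'
    refine ⟨T ::ₘ T', by simp [hT'card], ?_, ?_⟩
    · intro A hA
      rcases Multiset.mem_cons.mp hA with rfl | hA
      · exact ⟨hT0, hTsum⟩
      · exact hT'zs A hA
    · rw [Multiset.sum_cons]
      calc T + T'.sum ≤ T + (S - T) := add_le_add_right hT'sum T
        _ = S := add_tsub_cancel_of_le hTS

lemma Dk_le (ℓ : ℕ) (hℓ : AddMonoid.exponent G ≤ ℓ) (k : ℕ) (hk : 1 ≤ k) :
    Dk G k ≤ (k - 1) * ℓ + max (Dk G 1) (sleN G ℓ - ℓ) := by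
  obtain ⟨k', rfl⟩ : ∃ k', k = k' + 1 := ⟨k - 1, by omega⟩
  apply Nat.sInf_le
  intro S hS
  exact key ℓ hℓ k' S (by simpa using hS)

end Aux

theorem statement6 {G : Type*} [AddCommGroup G] [Fintype G] (k ℓ : ℕ)
    (hk : 1 ≤ k) (hℓ₁ : AddMonoid.exponent G ≤ ℓ) (hℓ₂ : ℓ + 1 ≤ Dk G 1) :
    Dk G k ≤ (k - 1) * ℓ + max (Dk G 1) (sleN G ℓ - ℓ) ∧
    Dk G k ≤ (k - 1) * AddMonoid.exponent G +
      max (Dk G 1) (etaC G - AddMonoid.exponent G) := by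
  exact ⟨Dk_le ℓ hℓ₁ k hk, Dk_le (AddMonoid.exponent G) le_rfl k hk⟩
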